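/- Let k ≥ 1 and K ≥ 1 be integers, let b > 0 and ρ be real numbers with ρ ≥ k, let n : {1,…,K} → ℕ be nonnegative integer cell counts with Σ_{m=1}^K n(m) > 0, and let u : {1,…,K} → ℝ satisfy 0 < u(m) ≤ 1 for all m. Then the function f : (0,∞) → ℝ defined by f(t) = −b·t + (ρ/k − 1)·log t + Σ_{m=1}^K ( log Γ(n(m) + t) − log Γ(t) + t·log u(m) ) is concave on (0,∞); equivalently, the density h(t) ∝ e^{−b t} t^{ρ/k−1} Γ(t)^{−K} ∏_{m=1}^K Γ(n(m)+t) u(m)^t is log-concave on (0,∞). -/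

import Mathlib

/-- A linear function is concave on any convex set. -/
lemma concaveOn_mul_left (c : ℝ) {S : Set ℝ} (hS : Convex ℝ S) :
    ConcaveOn ℝ S (fun t : ℝ => c * t) :=
  ⟨hS, fun x _ y _ a b _ _ _ => le_of_eq (by simp [smul_eq_mul]; ring)⟩

/-- `t ↦ log (t + c)` is concave on `(0, ∞)` for `c ≥ 0`. -/
lemma concaveOn_log_add (c : ℝ) (hc : 0 ≤ c) :
    ConcaveOn ℝ (Set.Ioi (0 : ℝ)) (fun t : ℝ => Real.log (t + c)) := by
  have h := (strictConcaveOn_log_Ioi.concaveOn).comp_affineMap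
    (AffineMap.id ℝ ℝ + AffineMap.const ℝ ℝ c)
  have hsub : Set.Ioi (0 : ℝ) ⊆ ⇑(AffineMap.id ℝ ℝ + AffineMap.const ℝ ℝ c) ⁻¹' Set.Ioi 0 := by
    intro x hx
    simp only [Set.mem_preimage, AffineMap.coe_add, Pi.add_apply, AffineMap.id_apply,
      AffineMap.const_apply, Set.mem_Ioi] at *
    linarith
  exact (h.subset hsub (convex_Ioi 0)).congr (fun t _ => by
    simp [Function.comp, AffineMap.coe_add, Pi.add_apply])

/-- Finite sums of concave functions are concave. -/
lemma concaveOn_finset_sum {ι : Type*} (s : Finset ι) {S : Set ℝ} (hS : Convex ℝ S)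
    (f : ι → ℝ → ℝ) (h : ∀ i ∈ s, ConcaveOn ℝ S (f i)) :
    ConcaveOn ℝ S (fun t => ∑ i ∈ s, f i t) := by
  classical
  induction s using Finset.induction with
  | empty => simpa using concaveOn_const (0 : ℝ) hS
  | @insert a s ha ih =>
    have := (h a (Finset.mem_insert_self a s)).add
      (ih (fun i hi => h i (Finset.mem_insert_of_mem hi)))
    exact this.congr (fun t _ => by simp [Finset.sum_insert ha])

/-- log Γ(n + t) − log Γ(t) = ∑_{i<n} log (t + i) for t > 0. -/
lemma logGamma_nat_add_sub (m : ℕ) {t : ℝ} (ht : 0 < t) :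
    Real.log (Real.Gamma ((m : ℝ) + t)) - Real.log (Real.Gamma t)
      = ∑ i ∈ Finset.range m, Real.log (t + i) := by
  induction m with
  | zero => simp
  | succ m ih =>
    have hmt : (0 : ℝ) < (m : ℝ) + t := by positivity
    have h1 : ((m + 1 : ℕ) : ℝ) + t = ((m : ℝ) + t) + 1 := by push_cast; ring
    rw [h1, Real.Gamma_add_one (ne_of_gt hmt), Real.log_mul (ne_of_gt hmt)
      (ne_of_gt (Real.Gamma_pos_of_pos hmt)), Finset.sum_range_succ, ← ih]
    ring_nf

/-- Theorem 2 of the paper: log-concavity of the full conditional density of a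
latent prior mean coordinate in the HiDDeN model. -/
theorem hidden_full_conditional_log_concave
    (k K : ℕ) (hk : 1 ≤ k) (hK : 1 ≤ K)
    (b ρ : ℝ) (hb : 0 < b) (hρ : (k : ℝ) ≤ ρ)
    (n : Fin K → ℕ) (hn : 0 < ∑ m, n m)
    (u : Fin K → ℝ) (hu : ∀ m, 0 < u m ∧ u m ≤ 1) :
    ConcaveOn ℝ (Set.Ioi (0 : ℝ))
      (fun t : ℝ =>
        -b * t + (ρ / k - 1) * Real.log t +
          ∑ m, (Real.log (Real.Gamma ((n m : ℝ) + t)) - Real.log (Real.Gamma t)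
            + t * Real.log (u m))) := by
  have hconv : Convex ℝ (Set.Ioi (0 : ℝ)) := convex_Ioi 0
  have hk0 : (0 : ℝ) < (k : ℝ) := by exact_mod_cast hk
  have hcoef : 0 ≤ ρ / k - 1 := by
    rw [sub_nonneg, le_div_iff₀ hk0, one_mul]; exact hρ
  -- the linear part
  have h1 : ConcaveOn ℝ (Set.Ioi (0 : ℝ)) (fun t : ℝ => -b * t) :=
    concaveOn_mul_left (-b) hconv
  -- the log part
  have h2 : ConcaveOn ℝ (Set.Ioi (0 : ℝ)) (fun t : ℝ => (ρ / k - 1) * Real.log t) := by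
    have h2' : ConcaveOn ℝ (Set.Ioi (0 : ℝ)) (fun t => (ρ / k - 1) • Real.log t) :=
      ConcaveOn.smul hcoef strictConcaveOn_log_Ioi.concaveOn
    simpa [smul_eq_mul] using h2'
  -- each summand
  have h3 : ∀ m : Fin K, ConcaveOn ℝ (Set.Ioi (0 : ℝ))
      (fun t : ℝ => Real.log (Real.Gamma ((n m : ℝ) + t)) - Real.log (Real.Gamma t)
        + t * Real.log (u m)) := by
    intro m
    have hsum : ConcaveOn ℝ (Set.Ioi (0 : ℝ))
        (fun t : ℝ => (∑ i ∈ Finset.range (n m), Real.log (t + i))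
          + t * Real.log (u m)) := by
      refine (concaveOn_finset_sum (Finset.range (n m)) hconv
        (fun i t => Real.log (t + i)) (fun i _ => concaveOn_log_add i (by positivity))).add ?_
      have := concaveOn_mul_left (Real.log (u m)) hconv
      refine this.congr (fun t _ => by ring)
    refine hsum.congr (fun t ht => ?_)
    rw [logGamma_nat_add_sub (n m) ht]
  have h4 : ConcaveOn ℝ (Set.Ioi (0 : ℝ))
      (fun t : ℝ => ∑ m, (Real.log (Real.Gamma ((n m : ℝ) + t)) - Real.log (Real.Gamma t)
        + t * Real.log (u m))) :=
    concaveOn_finset_sum Finset.univ hconv _ (fun m _ => h3 m)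
  exact (h1.add h2).add h4
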